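/- Let G and H be simple graphs on finite vertex types of cardinalities n₁ and n₂ respectively, and let G ∨ H denote their join. Then for every vertex u of G (viewed as the vertex Sum.inl u of G ∨ H), dp_{G∨H}(u) = X^{n₂} · dp_G(u) + X^{n₁} · dp(H) in ℕ[X]. -/

import Mathlib

open Polynomial

/-- The neighbor finset of a vertex (with classical decidability of adjacency). -/
noncomputable def nbhd {V : Type*} [Fintype V] (G : SimpleGraph V) (v : V) : Finset V :=
  letI := Classical.decRel G.Adj
  G.neighborFinset v

/-- The degree of a vertex (with classical decidability of adjacency). -/
noncomputable def degc {V : Type*} [Fintype V] (G : SimpleGraph V) (v : V) : ℕ :=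
  (nbhd G v).card

/-- The degree polynomial of a vertex `v`: the coefficient of `X^i` is the number
of neighbors of `v` having degree `i`. -/
noncomputable def dp {V : Type*} [Fintype V] (G : SimpleGraph V) (v : V) : ℕ[X] :=
  ∑ w ∈ nbhd G v, X ^ degc G w

/-- The degree polynomial of a graph `G`: the coefficient of `X^i` is the number
of vertices of `G` of degree `i`. -/
noncomputable def dpG {V : Type*} [Fintype V] (G : SimpleGraph V) : ℕ[X] :=
  ∑ v, X ^ degc G v

/-- The join of two simple graphs on disjoint vertex sets. -/
def graphJoin {α β : Type*} (G : SimpleGraph α) (H : SimpleGraph β) :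
    SimpleGraph (α ⊕ β) where
  Adj x y :=
    match x, y with
    | Sum.inl a, Sum.inl b => G.Adj a b
    | Sum.inr a, Sum.inr b => H.Adj a b
    | Sum.inl _, Sum.inr _ => True
    | Sum.inr _, Sum.inl _ => True
  symm := ⟨by rintro (a | a) (b | b) h <;> simp_all [SimpleGraph.adj_comm]⟩
  loopless := ⟨by rintro (a | a) h <;> simp_all⟩

lemma mem_nbhd {V : Type*} [Fintype V] (G : SimpleGraph V) (v w : V) :
    w ∈ nbhd G v ↔ G.Adj v w := by
  classical
  simp [nbhd, SimpleGraph.mem_neighborFinset]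

open scoped Classical in
lemma nbhd_join_inl {α β : Type*} [Fintype α] [Fintype β]
    (G : SimpleGraph α) (H : SimpleGraph β) (u : α) :
    nbhd (graphJoin G H) (Sum.inl u)
      = (nbhd G u).map ⟨Sum.inl, Sum.inl_injective⟩ ∪
        Finset.univ.map ⟨Sum.inr, Sum.inr_injective⟩ := by
  ext (x | x) <;> simp [mem_nbhd, graphJoin]

open scoped Classical in
lemma nbhd_join_inr {α β : Type*} [Fintype α] [Fintype β]
    (G : SimpleGraph α) (H : SimpleGraph β) (u : β) :
    nbhd (graphJoin G H) (Sum.inr u)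
      = (nbhd H u).map ⟨Sum.inr, Sum.inr_injective⟩ ∪
        Finset.univ.map ⟨Sum.inl, Sum.inl_injective⟩ := by
  ext (x | x) <;> simp [mem_nbhd, graphJoin]

lemma disj_lr {α β : Type*} (s : Finset α) (t : Finset β) :
    Disjoint (s.map ⟨Sum.inl, Sum.inl_injective⟩)
      (t.map ⟨Sum.inr, Sum.inr_injective⟩) := by
  simp [Finset.disjoint_left]

open scoped Classical in
lemma degc_join_inl {α β : Type*} [Fintype α] [Fintype β]
    (G : SimpleGraph α) (H : SimpleGraph β) (u : α) :
    degc (graphJoin G H) (Sum.inl u) = degc G u + Fintype.card β := by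
  rw [degc, nbhd_join_inl, Finset.card_union_of_disjoint (disj_lr _ _)]
  simp [degc]

open scoped Classical in
lemma degc_join_inr {α β : Type*} [Fintype α] [Fintype β]
    (G : SimpleGraph α) (H : SimpleGraph β) (u : β) :
    degc (graphJoin G H) (Sum.inr u) = degc H u + Fintype.card α := by
  rw [degc, nbhd_join_inr, Finset.card_union_of_disjoint (disj_lr _ _).symm]
  simp [degc]

/-- Degree polynomial of a vertex of `G` inside the join `G ∨ H`:
`dp_{G∨H}(u) = X^{n₂}·dp_G(u) + X^{n₁}·dp(H)`. -/
theorem dp_join_inl {α β : Type*} [Fintype α] [Fintype β]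
    (G : SimpleGraph α) (H : SimpleGraph β) (u : α) :
    dp (graphJoin G H) (Sum.inl u)
      = X ^ (Fintype.card β) * dp G u + X ^ (Fintype.card α) * dpG H := by
  classical
  rw [dp, nbhd_join_inl,
    Finset.sum_union (disj_lr _ _), Finset.sum_map, Finset.sum_map]
  simp only [Function.Embedding.coeFn_mk, degc_join_inl, degc_join_inr, pow_add,
    ]
  rw [dp, dpG, Finset.mul_sum, Finset.mul_sum]
  exact congrArg₂ (· + ·) (Finset.sum_congr rfl (fun x _ => by ring))
    (Finset.sum_congr rfl (fun x _ => by ring))
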